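/- Consider monomials z^{α₁}w^{α₂}z̄^{α₃}w̄^{α₄} with multi-indices α_i ∈ ℤ₊^d, |α|=k, subject to the constraints |α₁|+|α₄| = k−a, |α₂|+|α₃| = a, |α₁|+|α₂| = k−b, |α₃|+|α₄| = b. The number of such monomials is Σ_{j=0}^{m} C(k−M−j+d−1, d−1)·C(j+d−1, d−1)·C(m−j+d−1, d−1)·C(M−m+j+d−1, d−1), where m_a = min{a,k−a}, m_b = min{b,k−b}, m = min{m_a,m_b}, M = max{m_a,m_b}. -/

import Mathlib

open Finset

lemma homab_card_adT (d s : ℕ) (hd : 1 ≤ d) :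
    (Finset.Nat.antidiagonalTuple d s).card = (s + d - 1).choose (d - 1) := by
  have e : ↥(Finset.Nat.antidiagonalTuple d s) ≃ Sym (Fin d) s :=
    (Equiv.subtypeEquivRight fun x => Finset.Nat.mem_antidiagonalTuple).trans
      (Sym.equivNatSumOfFintype (Fin d) s).symm
  have h := Fintype.card_congr e
  rw [Fintype.card_coe, Sym.card_sym_eq_choose, Fintype.card_fin] at h
  rw [h, show d + s - 1 = s + d - 1 by omega]
  have h2 := Nat.choose_symm (show d - 1 ≤ s + d - 1 by omega)
  rwa [show s + d - 1 - (d - 1) = s by omega] at h2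


lemma homab_sum_helper (k a b : ℕ) (ha : a ≤ k) (hb : b ≤ k) (N : ℕ → ℕ) :
    ∑ t ∈ Finset.Icc (a - b) (min a (k - b)),
        N (k - b - t) * N t * N (a - t) * N (b - (a - t))
    = ∑ j ∈ Finset.range (min (min a (k - a)) (min b (k - b)) + 1),
        N (k - max (min a (k - a)) (min b (k - b)) - j) * N j *
          N (min (min a (k - a)) (min b (k - b)) - j) *
          N (max (min a (k - a)) (min b (k - b)) -
              min (min a (k - a)) (min b (k - b)) + j) := by
  set m := min (min a (k - a)) (min b (k - b)) with hm
  set M := max (min a (k - a)) (min b (k - b)) with hM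
  rw [← Finset.Ico_add_one_right_eq_Icc, Finset.sum_Ico_eq_sum_range,
    show min a (k - b) + 1 - (a - b) = m + 1 by omega]
  rcases le_or_gt a b with hab | hab
  · rcases le_or_gt a (k - b) with h1 | h1
    · rcases le_or_gt b (k - b) with h2 | h2
      · -- case 1: id, pairing (R1,R2,R3,R4)
        refine Finset.sum_congr rfl fun i hi => ?_
        rw [Finset.mem_range] at hi
        rw [show k - b - (a - b + i) = k - M - i by omega,
          show b - (a - (a - b + i)) = M - m + i by omega,
          show a - (a - b + i) = m - i by omega,
          show a - b + i = i by omega]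
      · -- case 2: reflect, pairing (R4,R3,R2,R1)
        conv_rhs => rw [← Finset.sum_range_reflect]
        refine Finset.sum_congr rfl fun i hi => ?_
        rw [Finset.mem_range] at hi
        rw [show k - b - (a - b + i) = M - m + (m + 1 - 1 - i) by omega,
          show b - (a - (a - b + i)) = k - M - (m + 1 - 1 - i) by omega,
          show a - (a - b + i) = m + 1 - 1 - i by omega,
          show a - b + i = m - (m + 1 - 1 - i) by omega]
        ring
    · rcases le_or_gt a (k - a) with h2 | h2
      · -- case 3: reflect, pairing (R2,R3,R4,R1)
        conv_rhs => rw [← Finset.sum_range_reflect]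
        refine Finset.sum_congr rfl fun i hi => ?_
        rw [Finset.mem_range] at hi
        rw [show k - b - (a - b + i) = m + 1 - 1 - i by omega,
          show b - (a - (a - b + i)) = k - M - (m + 1 - 1 - i) by omega,
          show a - (a - b + i) = M - m + (m + 1 - 1 - i) by omega,
          show a - b + i = m - (m + 1 - 1 - i) by omega]
        ring
      · -- case 4: id, pairing (R3,R2,R1,R4)
        refine Finset.sum_congr rfl fun i hi => ?_
        rw [Finset.mem_range] at hi
        rw [show k - b - (a - b + i) = m - i by omega,
          show b - (a - (a - b + i)) = M - m + i by omega,
          show a - (a - b + i) = k - M - i by omega,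
          show a - b + i = i by omega]
        ring
  · rcases le_or_gt b (k - a) with h1 | h1
    · rcases le_or_gt a (k - a) with h2 | h2
      · -- case 5: id, pairing (R1,R4,R3,R2)
        refine Finset.sum_congr rfl fun i hi => ?_
        rw [Finset.mem_range] at hi
        rw [show k - b - (a - b + i) = k - M - i by omega,
          show b - (a - (a - b + i)) = i by omega,
          show a - (a - b + i) = m - i by omega,
          show a - b + i = M - m + i by omega]
        ring
      · -- case 6: reflect, pairing (R4,R1,R2,R3)
        conv_rhs => rw [← Finset.sum_range_reflect]
        refine Finset.sum_congr rfl fun i hi => ?_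
        rw [Finset.mem_range] at hi
        rw [show k - b - (a - b + i) = M - m + (m + 1 - 1 - i) by omega,
          show b - (a - (a - b + i)) = m - (m + 1 - 1 - i) by omega,
          show a - (a - b + i) = m + 1 - 1 - i by omega,
          show a - b + i = k - M - (m + 1 - 1 - i) by omega]
        ring
    · rcases le_or_gt b (k - b) with h2 | h2
      · -- case 7: reflect, pairing (R2,R1,R4,R3)
        conv_rhs => rw [← Finset.sum_range_reflect]
        refine Finset.sum_congr rfl fun i hi => ?_
        rw [Finset.mem_range] at hi
        rw [show k - b - (a - b + i) = m + 1 - 1 - i by omega,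
          show b - (a - (a - b + i)) = m - (m + 1 - 1 - i) by omega,
          show a - (a - b + i) = M - m + (m + 1 - 1 - i) by omega,
          show a - b + i = k - M - (m + 1 - 1 - i) by omega]
        ring
      · -- case 8: id, pairing (R3,R4,R1,R2)
        refine Finset.sum_congr rfl fun i hi => ?_
        rw [Finset.mem_range] at hi
        rw [show k - b - (a - b + i) = m - i by omega,
          show b - (a - (a - b + i)) = i by omega,
          show a - (a - b + i) = k - M - i by omega,
          show a - b + i = M - m + i by omega]
        ring

/-- The number of monomials `z^{α₁}w^{α₂}z̄^{α₃}w̄^{α₄}` (with `αᵢ ∈ ℤ₊^d`)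
satisfying `|α₁|+|α₄| = k−a`, `|α₂|+|α₃| = a`, `|α₁|+|α₂| = k−b`,
`|α₃|+|α₄| = b`, i.e. the dimension of `Hom_k^{(a,b)}(ℍ^d, ℂ)`, equals
`Σ_{j=0}^{m} C(k−M−j+d−1,d−1)·C(j+d−1,d−1)·C(m−j+d−1,d−1)·C(M−m+j+d−1,d−1)`
where `m = min{min{a,k−a},min{b,k−b}}` and `M = max{min{a,k−a},min{b,k−b}}`. -/
theorem homab_dim (k d a b : ℕ) (hd : 1 ≤ d) (ha : a ≤ k) (hb : b ≤ k) :
    Nat.card {α : Fin 4 → Fin d → ℕ //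
        (∑ t, α 0 t) + (∑ t, α 3 t) = k - a ∧
        (∑ t, α 1 t) + (∑ t, α 2 t) = a ∧
        (∑ t, α 0 t) + (∑ t, α 1 t) = k - b ∧
        (∑ t, α 2 t) + (∑ t, α 3 t) = b} =
      ∑ j ∈ Finset.range (min (min a (k - a)) (min b (k - b)) + 1),
        (k - max (min a (k - a)) (min b (k - b)) - j + d - 1).choose (d - 1) *
          (j + d - 1).choose (d - 1) *
          (min (min a (k - a)) (min b (k - b)) - j + d - 1).choose (d - 1) *
          (max (min a (k - a)) (min b (k - b)) -
              min (min a (k - a)) (min b (k - b)) + j + d - 1).choose (d - 1) := by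
  classical
  set adT := Finset.Nat.antidiagonalTuple d with hadT
  set F : Finset (Fin 4 → Fin d → ℕ) :=
    (Finset.Icc (a - b) (min a (k - b))).biUnion fun t =>
      ((adT (k - b - t) ×ˢ adT t ×ˢ adT (a - t) ×ˢ adT (b - (a - t))).image
        fun q => ![q.1, q.2.1, q.2.2.1, q.2.2.2]) with hF
  have hinj : Function.Injective
      (fun q : (Fin d → ℕ) × (Fin d → ℕ) × (Fin d → ℕ) × (Fin d → ℕ) =>
        ![q.1, q.2.1, q.2.2.1, q.2.2.2]) := by
    rintro ⟨p0, p1, p2, p3⟩ ⟨q0, q1, q2, q3⟩ h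
    have h0 : p0 = q0 := congrFun h 0
    have h1 : p1 = q1 := congrFun h 1
    have h2 : p2 = q2 := congrFun h 2
    have h3 : p3 = q3 := congrFun h 3
    simp_all
  have hmem : ∀ α : Fin 4 → Fin d → ℕ,
      ((∑ t, α 0 t) + (∑ t, α 3 t) = k - a ∧
        (∑ t, α 1 t) + (∑ t, α 2 t) = a ∧
        (∑ t, α 0 t) + (∑ t, α 1 t) = k - b ∧
        (∑ t, α 2 t) + (∑ t, α 3 t) = b) ↔ α ∈ F := by
    intro α
    simp only [hF, Finset.mem_biUnion, Finset.mem_image, Finset.mem_product,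
      Finset.mem_Icc, hadT, Finset.Nat.mem_antidiagonalTuple]
    constructor
    · rintro ⟨h1, h2, h3, h4⟩
      refine ⟨∑ t, α 1 t, ⟨by omega, by omega⟩, (α 0, α 1, α 2, α 3),
        ⟨by show ∑ t, α 0 t = _; omega, by show ∑ t, α 1 t = _; omega,
          by show ∑ t, α 2 t = _; omega, by show ∑ t, α 3 t = _; omega⟩, ?_⟩
      funext i
      fin_cases i <;> rfl
    · rintro ⟨t, ⟨ht1, ht2⟩, ⟨q0, q1, q2, q3⟩, ⟨hq0, hq1, hq2, hq3⟩, rfl⟩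
      have hq0' : ∑ j, q0 j = k - b - t := hq0
      have hq1' : ∑ j, q1 j = t := hq1
      have hq2' : ∑ j, q2 j = a - t := hq2
      have hq3' : ∑ j, q3 j = b - (a - t) := hq3
      clear hq0 hq1 hq2 hq3
      refine ⟨?_, ?_, ?_, ?_⟩
      · show (∑ j, q0 j) + (∑ j, q3 j) = k - a
        omega
      · show (∑ j, q1 j) + (∑ j, q2 j) = a
        omega
      · show (∑ j, q0 j) + (∑ j, q1 j) = k - b
        omega
      · show (∑ j, q2 j) + (∑ j, q3 j) = b
        omega
  have step1 : Nat.card {α : Fin 4 → Fin d → ℕ //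
        (∑ t, α 0 t) + (∑ t, α 3 t) = k - a ∧
        (∑ t, α 1 t) + (∑ t, α 2 t) = a ∧
        (∑ t, α 0 t) + (∑ t, α 1 t) = k - b ∧
        (∑ t, α 2 t) + (∑ t, α 3 t) = b} = F.card := by
    rw [Nat.card_congr (Equiv.subtypeEquivRight hmem), Nat.card_eq_finsetCard]
  rw [step1, hF, Finset.card_biUnion]
  · refine Eq.trans (Finset.sum_congr rfl fun t ht => ?_)
      (homab_sum_helper k a b ha hb fun s => (s + d - 1).choose (d - 1))
    rw [Finset.card_image_of_injective _ hinj, Finset.card_product,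
      Finset.card_product, Finset.card_product, hadT,
      homab_card_adT d _ hd, homab_card_adT d _ hd, homab_card_adT d _ hd,
      homab_card_adT d _ hd]
    ring
  · rintro t1 ht1 t2 ht2 hne
    rw [Function.onFun, Finset.disjoint_left]
    rintro α hα1 hα2
    simp only [Finset.mem_image, Finset.mem_product, hadT,
      Finset.Nat.mem_antidiagonalTuple] at hα1 hα2
    obtain ⟨⟨q0, q1, q2, q3⟩, ⟨-, hq1, -, -⟩, rfl⟩ := hα1
    obtain ⟨⟨p0, p1, p2, p3⟩, ⟨-, hp1, -, -⟩, heq⟩ := hα2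
    have hpq : (p0, p1, p2, p3) = (q0, q1, q2, q3) := hinj (a₁ := (p0, p1, p2, p3)) (a₂ := (q0, q1, q2, q3)) heq
    injection hpq with h0 h
    injection h with h1 h23
    have hp1' : ∑ j, p1 j = t2 := hp1
    have hq1' : ∑ j, q1 j = t1 := hq1
    rw [h1] at hp1'
    exact hne (hq1'.symm.trans hp1')
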